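/- Let X be a locally compact Hausdorff space and let S be a unital *-subalgebra of C_b(X). Then S separates the points of X if and only if S is strictly dense in C_b(X), i.e. if and only if for every f ∈ C_b(X), every finite set Φ ⊆ C₀(X) and every ε > 0 there exists s ∈ S such that ‖(f − s)·φ‖_∞ < ε for all φ ∈ Φ. -/

import Mathlib

open scoped ZeroAtInfty BoundedContinuousFunction

noncomputable def myResHom {X : Type*} [TopologicalSpace X] (K : Set X) :
    (X →ᵇ ℂ) →⋆ₐ[ℂ] C(K, ℂ) where
  toFun f := f.toContinuousMap.restrict K
  map_one' := by ext x; simp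
  map_mul' f g := by ext x; simp
  map_zero' := by ext x; simp
  map_add' f g := by ext x; simp
  commutes' c := by ext x; simp
  map_star' f := by ext x; simp

noncomputable def myCompHom {X : Type*} [TopologicalSpace X] {D : Set ℂ} [CompactSpace D]
    (r : C(X, D)) : C(D, ℂ) →⋆ₐ[ℂ] (X →ᵇ ℂ) where
  toFun q := BoundedContinuousFunction.ofNormedAddCommGroup (fun x => q (r x))
    (q.continuous.comp r.continuous) ‖q‖ (fun x => q.norm_coe_le_norm (r x))
  map_one' := by ext x; simp
  map_mul' f g := by ext x; simp
  map_zero' := by ext x; simp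
  map_add' f g := by ext x; simp
  commutes' c := by ext x; simp
  map_star' f := by ext x; simp

@[simp] lemma myResHom_apply {X : Type*} [TopologicalSpace X] (K : Set X) (f : X →ᵇ ℂ) (x : K) :
    myResHom K f x = f x := rfl

@[simp] lemma myCompHom_apply {X : Type*} [TopologicalSpace X] {D : Set ℂ} [CompactSpace D]
    (r : C(X, D)) (q : C(D, ℂ)) (x : X) : myCompHom r q x = q (r x) := rfl

lemma myMemS {X : Type*} [TopologicalSpace X] (S : StarSubalgebra ℂ (X →ᵇ ℂ))
    {D : Set ℂ} [CompactSpace D] (r : C(X, D)) {s₀ : X →ᵇ ℂ} (hs₀ : s₀ ∈ S)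
    (hgen : myCompHom r ((Polynomial.toContinuousMapOnAlgHom D) Polynomial.X) = s₀)
    {q : C(D, ℂ)} (hq : q ∈ (polynomialFunctions D).starClosure) :
    myCompHom r q ∈ S := by
  rw [polynomialFunctions.starClosure_eq_adjoin_X] at hq
  have h2 : myCompHom r q ∈
      StarSubalgebra.map (myCompHom r)
        (StarAlgebra.adjoin ℂ {(Polynomial.toContinuousMapOnAlgHom D) Polynomial.X}) :=
    ⟨q, hq, rfl⟩
  rw [StarAlgHom.map_adjoin, Set.image_singleton, hgen] at h2
  exact StarAlgebra.adjoin_le (Set.singleton_subset_iff.mpr hs₀) h2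

set_option maxHeartbeats 1600000 in
theorem stmt1 {X : Type*} [TopologicalSpace X] [LocallyCompactSpace X] [T2Space X]
    (S : StarSubalgebra ℂ (X →ᵇ ℂ)) :
    (∀ x y : X, x ≠ y → ∃ s ∈ S, s x ≠ s y) ↔
      (∀ f : X →ᵇ ℂ, ∀ Φ : Finset C₀(X, ℂ), ∀ ε : ℝ, 0 < ε →
        ∃ s ∈ S, ∀ φ ∈ Φ, ‖(f - s) * φ.toBCF‖ < ε) := by
  constructor
  · intro hsep f Φ ε hε
    obtain ⟨M, hM0, hMb⟩ : ∃ M : ℝ, 0 ≤ M ∧ ∀ x, ‖f x‖ ≤ M :=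
      ⟨‖f‖, norm_nonneg f, f.norm_coe_le_norm⟩
    obtain ⟨Cmax, hCpos, hCle⟩ : ∃ C : ℝ, 0 < C ∧ ∀ φ ∈ Φ, ‖φ.toBCF‖ ≤ C := by
      refine ⟨1 + ∑ φ ∈ Φ, ‖φ.toBCF‖, by positivity, fun φ hφ => ?_⟩
      have h1 : ‖φ.toBCF‖ ≤ ∑ ψ ∈ Φ, ‖ψ.toBCF‖ :=
        Finset.single_le_sum (fun i _ => norm_nonneg _) hφ
      linarith
    set η : ℝ := min 1 (ε / (4 * Cmax)) with hη
    have hη0 : 0 < η := lt_min one_pos (by positivity)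
    have hη1 : η ≤ 1 := min_le_left _ _
    have hηε : η ≤ ε / (4 * Cmax) := min_le_right _ _
    set δ : ℝ := ε / (2 * (2 * M + 3)) with hδ
    have hδ0 : 0 < δ := by positivity
    -- the compact set K
    set K : Set X := ⋃ φ ∈ Φ, {x | δ ≤ ‖φ x‖} with hK
    have hKcomp : IsCompact K := by
      apply Φ.finite_toSet.isCompact_biUnion
      intro φ hφ
      have hten : Filter.Tendsto φ (Filter.cocompact X) (nhds 0) :=
        zero_at_infty φ
      have h2 := Metric.tendsto_nhds.mp hten δ hδ0
      rw [Filter.eventually_iff, Filter.mem_cocompact] at h2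
      obtain ⟨Kφ, hK1, hK2⟩ := h2
      apply hK1.of_isClosed_subset
      · exact isClosed_le continuous_const (continuous_norm.comp φ.continuous)
      · intro x hx
        by_contra hxK
        have := hK2 hxK
        simp only [Set.mem_setOf_eq, dist_zero_right] at this
        exact absurd hx (by simpa using not_le.mpr this)
    haveI : CompactSpace K := isCompact_iff_compactSpace.mp hKcomp
    -- Stone-Weierstrass on K
    set A : StarSubalgebra ℂ C(K, ℂ) := StarSubalgebra.map (myResHom K) S with hA
    have hAsep : A.SeparatesPoints := by
      rintro ⟨x, hx⟩ ⟨y, hy⟩ hxy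
      obtain ⟨s, hsS, hsxy⟩ := hsep x y (fun h => hxy (Subtype.ext h))
      exact ⟨_, ⟨myResHom K s, ⟨s, hsS, rfl⟩, rfl⟩, hsxy⟩
    have htop := ContinuousMap.starSubalgebra_topologicalClosure_eq_top_of_separatesPoints A hAsep
    have hfK : (myResHom K f) ∈ closure (A : Set C(K, ℂ)) := by
      rw [← StarSubalgebra.topologicalClosure_coe, htop]; trivial
    obtain ⟨g, hgA, hgdist⟩ := Metric.mem_closure_iff.mp hfK η hη0
    obtain ⟨s₀, hs₀S, rfl⟩ := hgA
    -- truncation setup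
    set N : ℝ := ‖s₀‖ with hN
    set D : Set ℂ := Metric.closedBall 0 N with hD
    haveI : CompactSpace D := isCompact_iff_compactSpace.mp (isCompact_closedBall 0 N)
    have hrmem : ∀ x : X, s₀ x ∈ D := fun x => by
      simpa [hD, Metric.mem_closedBall, dist_zero_right] using s₀.norm_coe_le_norm x
    set r : C(X, D) := ⟨fun x => ⟨s₀ x, hrmem x⟩, (s₀.continuous.subtype_mk hrmem)⟩ with hr
    set R : ℝ := M + 1 with hR
    have hRpos : 0 < R := by positivity
    have hmaxpos : ∀ z : ℂ, 0 < max R ‖z‖ := fun z => lt_of_lt_of_le hRpos (le_max_left _ _)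
    set T : C(D, ℂ) := ⟨fun z => (R / max R ‖(z : ℂ)‖ : ℝ) • (z : ℂ),
      ((continuous_const.div (continuous_const.max (continuous_norm.comp continuous_subtype_val))
        (fun z => (hmaxpos (z : ℂ)).ne')).smul continuous_subtype_val)⟩ with hT
    have hTfix : ∀ z : D, ‖(z : ℂ)‖ ≤ R → T z = (z : ℂ) := by
      intro z hz
      simp only [hT, ContinuousMap.coe_mk]
      rw [max_eq_left hz, div_self hRpos.ne', one_smul]
    have hTnorm : ∀ z : D, ‖T z‖ ≤ R := by
      intro z
      simp only [hT, ContinuousMap.coe_mk, norm_smul, Real.norm_eq_abs]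
      have hd : 0 ≤ R / max R ‖(z : ℂ)‖ := div_nonneg hRpos.le (hmaxpos _).le
      rw [abs_of_nonneg hd]
      have h1 : (R / max R ‖(z : ℂ)‖) * ‖(z : ℂ)‖ ≤ (R / max R ‖(z : ℂ)‖) * max R ‖(z : ℂ)‖ :=
        mul_le_mul_of_nonneg_left (le_max_right _ _) hd
      rwa [div_mul_cancel₀ _ (hmaxpos (z : ℂ)).ne'] at h1
    have hTmem : T ∈ closure ((polynomialFunctions D).starClosure : Set C(D, ℂ)) := by
      rw [← StarSubalgebra.topologicalClosure_coe,
        polynomialFunctions.starClosure_topologicalClosure]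
      trivial
    obtain ⟨q, hqmem, hqdist⟩ := Metric.mem_closure_iff.mp hTmem η hη0
    set t : X →ᵇ ℂ := myCompHom r q with ht
    have hgen : myCompHom r ((Polynomial.toContinuousMapOnAlgHom D) Polynomial.X) = s₀ := by
      ext x
      simp [Polynomial.toContinuousMapOnAlgHom_apply, Polynomial.toContinuousMapOn,
        Polynomial.toContinuousMap, hr]
    have htS : t ∈ S := myMemS S r hs₀S hgen hqmem
    refine ⟨t, htS, ?_⟩
    intro φ hφ
    have key : ∀ x, ‖(f x - t x) * φ x‖ ≤ ε / 2 := by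
      intro x
      rw [norm_mul]
      have hqT : ∀ z : D, ‖T z - q z‖ < η := by
        intro z
        calc ‖T z - q z‖ = dist (T z) (q z) := (dist_eq_norm _ _).symm
          _ ≤ dist T q := ContinuousMap.dist_apply_le_dist z
          _ < η := hqdist
      have htx : t x = q (r x) := rfl
      by_cases hx : x ∈ K
      · -- near the compact set: good approximation
        have h1 : ‖f x - s₀ x‖ < η := by
          have h2 : dist (myResHom K f ⟨x, hx⟩) (myResHom K s₀ ⟨x, hx⟩) ≤
              dist (myResHom K f) (myResHom K s₀) := ContinuousMap.dist_apply_le_dist _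
          have h3 := lt_of_le_of_lt h2 hgdist
          rwa [dist_eq_norm, myResHom_apply, myResHom_apply] at h3
        have hs0x : ‖s₀ x‖ ≤ R := by
          have h4 : ‖s₀ x‖ ≤ ‖f x‖ + ‖f x - s₀ x‖ := by
            have := norm_add_le (f x - s₀ x) (s₀ x - f x + s₀ x)
            calc ‖s₀ x‖ = ‖f x + (s₀ x - f x)‖ := by ring_nf
              _ ≤ ‖f x‖ + ‖s₀ x - f x‖ := norm_add_le _ _
              _ = ‖f x‖ + ‖f x - s₀ x‖ := by rw [norm_sub_rev]
          have h5 : ‖f x‖ ≤ M := hMb x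
          have := h1.le
          simp only [hR]
          linarith
        have hTrx : T (r x) = s₀ x := hTfix (r x) hs0x
        have h2 : ‖t x - s₀ x‖ < η := by
          rw [htx, ← hTrx, norm_sub_rev]
          exact hqT (r x)
        have hft : ‖f x - t x‖ ≤ 2 * η := by
          calc ‖f x - t x‖ = ‖(f x - s₀ x) + (s₀ x - t x)‖ := by ring_nf
            _ ≤ ‖f x - s₀ x‖ + ‖s₀ x - t x‖ := norm_add_le _ _
            _ = ‖f x - s₀ x‖ + ‖t x - s₀ x‖ := by rw [norm_sub_rev (s₀ x) (t x)]
            _ ≤ 2 * η := by linarith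
        have hφx : ‖φ x‖ ≤ Cmax := le_trans (φ.toBCF.norm_coe_le_norm x) (hCle φ hφ)
        have hεc : 2 * η * Cmax ≤ ε / 2 := by
          have : η * (4 * Cmax) ≤ ε / (4 * Cmax) * (4 * Cmax) :=
            mul_le_mul_of_nonneg_right hηε (by positivity)
          rw [div_mul_cancel₀ _ (by positivity : (4 : ℝ) * Cmax ≠ 0)] at this
          nlinarith
        calc ‖f x - t x‖ * ‖φ x‖ ≤ (2 * η) * Cmax :=
              mul_le_mul hft hφx (norm_nonneg _) (by positivity)
          _ ≤ ε / 2 := hεc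
      · -- far away: φ is small
        have hφsmall : ‖φ x‖ < δ := by
          by_contra hcon
          exact hx (Set.mem_biUnion hφ (not_lt.mp hcon))
        have htxb : ‖t x‖ ≤ R + η := by
          rw [htx]
          calc ‖q (r x)‖ = ‖T (r x) + (q (r x) - T (r x))‖ := by ring_nf
            _ ≤ ‖T (r x)‖ + ‖q (r x) - T (r x)‖ := norm_add_le _ _
            _ = ‖T (r x)‖ + ‖T (r x) - q (r x)‖ := by rw [norm_sub_rev (q (r x)) (T (r x))]
            _ ≤ R + η := add_le_add (hTnorm _) (hqT _).le
        have hftb : ‖f x - t x‖ ≤ 2 * M + 3 := by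
          have h5 : ‖f x‖ ≤ M := hMb x
          calc ‖f x - t x‖ ≤ ‖f x‖ + ‖t x‖ := norm_sub_le _ _
            _ ≤ M + (R + η) := add_le_add h5 htxb
            _ ≤ 2 * M + 3 := by simp only [hR]; linarith
        have hδc : (2 * M + 3) * δ = ε / 2 := by
          rw [hδ]
          field_simp
        calc ‖f x - t x‖ * ‖φ x‖ ≤ (2 * M + 3) * δ :=
              mul_le_mul hftb hφsmall.le (norm_nonneg _) (by positivity)
          _ = ε / 2 := hδc
    have hle : ‖(f - t) * φ.toBCF‖ ≤ ε / 2 := by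
      apply BoundedContinuousFunction.norm_le (by positivity) |>.mpr
      intro x
      simpa using key x
    linarith
  · -- easy direction
    intro hdense x y hxy
    obtain ⟨g, hg1, hg0, hgc, hgI⟩ :=
      exists_continuous_one_zero_of_isCompact (isCompact_singleton (x := x))
        (isClosed_singleton (x := y)) (by simpa using hxy)
    obtain ⟨h, hh1, -, hhc, hhI⟩ :=
      exists_continuous_one_zero_of_isCompact
        ((Set.finite_singleton x).insert y).isCompact isClosed_empty (Set.disjoint_empty _)
    set fC : X →ᵇ ℂ := BoundedContinuousFunction.ofNormedAddCommGroup (fun z => (g z : ℂ))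
      (Complex.continuous_ofReal.comp g.continuous) 1
      (fun z => by
        rw [Complex.norm_real]
        have := hgI z
        rw [Real.norm_eq_abs, abs_le]
        constructor <;> [linarith [this.1]; linarith [this.2]]) with hfC
    have hφz : Filter.Tendsto (fun z => (h z : ℂ)) (Filter.cocompact X) (nhds 0) := by
      have : HasCompactSupport (fun z => (h z : ℂ)) := by
        apply hhc.comp_left (g := fun r : ℝ => (r : ℂ))
        simp
      exact this.is_zero_at_infty
    set φC : C₀(X, ℂ) := ⟨⟨fun z => (h z : ℂ), Complex.continuous_ofReal.comp h.continuous⟩,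
      hφz⟩ with hφC
    obtain ⟨s, hsS, hs⟩ := hdense fC {φC} (1 / 2) (by norm_num)
    refine ⟨s, hsS, ?_⟩
    have hb := hs φC (Finset.mem_singleton_self φC)
    have hx' : ‖(fC x - s x) * φC x‖ < 1 / 2 :=
      lt_of_le_of_lt (((fC - s) * φC.toBCF).norm_coe_le_norm x) hb
    have hy' : ‖(fC y - s y) * φC y‖ < 1 / 2 :=
      lt_of_le_of_lt (((fC - s) * φC.toBCF).norm_coe_le_norm y) hb
    have hφCx : φC x = 1 := by
      show ((h x : ℝ) : ℂ) = 1
      rw [show h x = 1 from hh1 (by simp)]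
      norm_num
    have hφCy : φC y = 1 := by
      show ((h y : ℝ) : ℂ) = 1
      rw [show h y = 1 from hh1 (by simp)]
      norm_num
    have hfCx : fC x = 1 := by
      simp only [hfC, BoundedContinuousFunction.coe_ofNormedAddCommGroup]
      exact mod_cast congrArg Complex.ofReal (hg1 rfl)
    have hfCy : fC y = 0 := by
      simp only [hfC, BoundedContinuousFunction.coe_ofNormedAddCommGroup]
      exact mod_cast congrArg Complex.ofReal (hg0 rfl)
    rw [hφCx, hfCx, mul_one] at hx'
    rw [hφCy, hfCy, mul_one, zero_sub, norm_neg] at hy'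
    intro heq
    rw [heq] at hx'
    have : (1 : ℝ) ≤ ‖(1 : ℂ) - s y‖ + ‖s y‖ := by
      have := norm_add_le ((1 : ℂ) - s y) (s y)
      simpa using this
    linarith
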